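/- arXiv:2011.10396 — 3 statements merged into one kernel-verified Lean document; each statement's English description precedes it below -/
import Mathlib

section
/- Let M, N ∈ ℝ^{p×k} be real matrices and suppose NᵀM admits a singular value decomposition NᵀM = U S Vᵀ, where U, V ∈ ℝ^{k×k} are orthogonal (UᵀU = I and VᵀV = I) and S ∈ ℝ^{k×k} is diagonal with nonnegative diagonal entries. Then R* = U Vᵀ solves the orthogonal Procrustes problem: for every R ∈ ℝ^{k×k} with RᵀR = I, ‖M − N(UVᵀ)‖_F ≤ ‖M − NR‖_F. -/
open Matrix

/-- Frobenius norm of a real matrix: `‖A‖_F = √(Σ_{i,j} a_{ij}²)`. -/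
noncomputable def frobeniusNorm {p k : ℕ} (A : Matrix (Fin p) (Fin k) ℝ) : ℝ :=
  Real.sqrt (∑ i, ∑ j, (A i j) ^ 2)

lemma sum_sq_eq_trace {p k : ℕ} (A : Matrix (Fin p) (Fin k) ℝ) :
    ∑ i, ∑ j, (A i j) ^ 2 = trace (Aᵀ * A) := by
  simp only [trace, diag, mul_apply, transpose_apply, sq]
  rw [Finset.sum_comm]

lemma expand_trace {p k : ℕ} (M N : Matrix (Fin p) (Fin k) ℝ)
    (R : Matrix (Fin k) (Fin k) ℝ) (hR : Rᵀ * R = 1) :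
    trace ((M - N * R)ᵀ * (M - N * R)) =
      trace (Mᵀ * M) + trace (Nᵀ * N) - 2 * trace (Rᵀ * Nᵀ * M) := by
  have hR' : R * Rᵀ = 1 := mul_eq_one_comm.mp hR
  have h1 : trace (Mᵀ * (N * R)) = trace (Rᵀ * Nᵀ * M) := by
    rw [← trace_transpose (Mᵀ * (N * R))]
    simp [Matrix.transpose_mul, Matrix.mul_assoc]
  have h2 : trace ((N * R)ᵀ * (N * R)) = trace (Nᵀ * N) := by
    have : (N * R)ᵀ * (N * R) = Rᵀ * (Nᵀ * N * R) := by
      simp [Matrix.transpose_mul, Matrix.mul_assoc]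
    rw [this, trace_mul_comm, Matrix.mul_assoc, hR', Matrix.mul_one]
  have h3 : trace ((N * R)ᵀ * M) = trace (Rᵀ * Nᵀ * M) := by
    simp [Matrix.transpose_mul, Matrix.mul_assoc]
  rw [Matrix.transpose_sub, Matrix.sub_mul, Matrix.mul_sub, Matrix.mul_sub,
    trace_sub, trace_sub, trace_sub, h1, h2, h3]
  ring

/-- **Orthogonal Procrustes.** If `NᵀM = U S Vᵀ` is a singular value decomposition
(`U, V` orthogonal, `S` diagonal with nonnegative diagonal entries), then
`R* = U Vᵀ` minimizes `‖M − N R‖_F` over orthogonal `R`. -/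
theorem orthogonal_procrustes {p k : ℕ}
    (M N : Matrix (Fin p) (Fin k) ℝ)
    (U S V : Matrix (Fin k) (Fin k) ℝ)
    (hU : Uᵀ * U = 1) (hV : Vᵀ * V = 1)
    (hSdiag : ∀ i j, i ≠ j → S i j = 0)
    (hSnonneg : ∀ i, 0 ≤ S i i)
    (hSVD : Nᵀ * M = U * S * Vᵀ) :
    ∀ R : Matrix (Fin k) (Fin k) ℝ, Rᵀ * R = 1 →
      frobeniusNorm (M - N * (U * Vᵀ)) ≤ frobeniusNorm (M - N * R) := by
  intro R hR
  have hV' : V * Vᵀ = 1 := mul_eq_one_comm.mp hV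
  have hR' : R * Rᵀ = 1 := mul_eq_one_comm.mp hR
  have hUVt : (U * Vᵀ)ᵀ * (U * Vᵀ) = 1 := by
    rw [Matrix.transpose_mul, Matrix.transpose_transpose]
    calc V * Uᵀ * (U * Vᵀ) = V * (Uᵀ * U) * Vᵀ := by
          simp [Matrix.mul_assoc]
      _ = 1 := by rw [hU, Matrix.mul_one, hV']
  -- trace for the optimal R* equals trace S
  have hstar : trace ((U * Vᵀ)ᵀ * Nᵀ * M) = trace S := by
    rw [Matrix.mul_assoc, hSVD, Matrix.transpose_mul, Matrix.transpose_transpose]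
    have : V * Uᵀ * (U * S * Vᵀ) = V * S * Vᵀ := by
      calc V * Uᵀ * (U * S * Vᵀ) = V * (Uᵀ * U) * (S * Vᵀ) := by
            simp [Matrix.mul_assoc]
        _ = V * (S * Vᵀ) := by rw [hU, Matrix.mul_one]
        _ = V * S * Vᵀ := by rw [Matrix.mul_assoc]
    rw [this, Matrix.mul_assoc, trace_mul_comm, Matrix.mul_assoc, hV, Matrix.mul_one]
  -- trace for general R is at most trace S
  have hgen : trace (Rᵀ * Nᵀ * M) ≤ trace S := by
    rw [Matrix.mul_assoc, hSVD]
    set W : Matrix (Fin k) (Fin k) ℝ := Vᵀ * Rᵀ * U with hWdef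
    have hW : Wᵀ * W = 1 := by
      have h : Wᵀ * W = Uᵀ * (R * (V * (Vᵀ * (Rᵀ * U)))) := by
        simp [hWdef, Matrix.transpose_mul, Matrix.mul_assoc]
      rw [h, ← Matrix.mul_assoc V Vᵀ, hV', Matrix.one_mul,
        ← Matrix.mul_assoc R Rᵀ, hR', Matrix.one_mul, hU]
    have hWdiag : ∀ i, W i i ≤ 1 := by
      intro i
      have hcol : ∑ j, W j i * W j i = 1 := by
        have := congrFun (congrFun hW i) i
        simpa [Matrix.mul_apply, Matrix.one_apply] using this
      have hle : (W i i) ^ 2 ≤ 1 := by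
        rw [sq, ← hcol]
        exact Finset.single_le_sum (f := fun j => W j i * W j i)
          (fun j _ => mul_self_nonneg _) (Finset.mem_univ i)
      nlinarith [sq_nonneg (W i i - 1)]
    have htr : trace (Rᵀ * (U * S * Vᵀ)) = ∑ i, S i i * W i i := by
      have hcyc : trace (Rᵀ * (U * S * Vᵀ)) = trace (S * W) := by
        rw [hWdef]
        calc trace (Rᵀ * (U * S * Vᵀ))
            = trace ((Rᵀ * U) * (S * Vᵀ)) := by simp only [Matrix.mul_assoc]
          _ = trace ((S * Vᵀ) * (Rᵀ * U)) := trace_mul_comm _ _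
          _ = trace (S * (Vᵀ * Rᵀ * U)) := by simp [Matrix.mul_assoc]
      rw [hcyc]
      simp only [trace, diag, Matrix.mul_apply]
      refine Finset.sum_congr rfl fun i _ => ?_
      rw [Finset.sum_eq_single i]
      · intro j _ hji
        rw [hSdiag i j (Ne.symm hji), zero_mul]
      · intro h; exact absurd (Finset.mem_univ i) h
    rw [htr, trace]
    apply Finset.sum_le_sum
    intro i _
    simpa [diag] using mul_le_of_le_one_right (hSnonneg i) (hWdiag i)
  -- combine
  unfold frobeniusNorm
  apply Real.sqrt_le_sqrt
  rw [sum_sq_eq_trace, sum_sq_eq_trace, expand_trace M N _ hUVt, expand_trace M N R hR]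
  rw [hstar] at *
  have := hgen
  nlinarith [hgen]
end

section
/- Let A ∈ ℝ^{k×k} be a real matrix with singular value decomposition A = U S Vᵀ, where U, V ∈ ℝ^{k×k} are orthogonal (UᵀU = I and VᵀV = I) and S ∈ ℝ^{k×k} is diagonal with nonnegative diagonal entries. Then for every R ∈ ℝ^{k×k} with RᵀR = I one has Tr(Rᵀ A) ≤ Tr(S), and equality holds for R = U Vᵀ, i.e. Tr((UVᵀ)ᵀ A) = Tr(S). In particular, R = UVᵀ maximizes Tr(Rᵀ A) over all orthogonal matrices R. -/
open Matrix

/-- Diagonal entries of an orthogonal matrix are at most 1. -/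
lemma diag_le_one_of_orthog {k : ℕ} (M : Matrix (Fin k) (Fin k) ℝ)
    (hM : Mᵀ * M = 1) (i : Fin k) : M i i ≤ 1 := by
  have h : (Mᵀ * M) i i = 1 := by rw [hM]; simp [Matrix.one_apply]
  have h2 : ∑ j, M j i * M j i = 1 := by
    simpa [Matrix.mul_apply, Matrix.transpose_apply] using h
  have hle : M i i * M i i ≤ 1 := by
    rw [← h2]
    exact Finset.single_le_sum (fun j _ => mul_self_nonneg (M j i)) (Finset.mem_univ i)
  nlinarith [hle]

/-- If `A = U S Vᵀ` is a singular value decomposition of a square matrix `A`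
(`U, V` orthogonal, `S` diagonal with nonnegative diagonal entries), then
`Tr(Rᵀ A) ≤ Tr(S)` for every orthogonal `R`, with equality for `R = U Vᵀ`.
In particular `R = U Vᵀ` maximizes `Tr(Rᵀ A)` over orthogonal matrices. -/
theorem trace_mul_le_trace_singularValues {k : ℕ}
    (A U S V : Matrix (Fin k) (Fin k) ℝ)
    (hU : Uᵀ * U = 1) (hV : Vᵀ * V = 1)
    (hSdiag : ∀ i j, i ≠ j → S i j = 0)
    (hSnonneg : ∀ i, 0 ≤ S i i)
    (hSVD : A = U * S * Vᵀ) :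
    (∀ R : Matrix (Fin k) (Fin k) ℝ, Rᵀ * R = 1 →
      Matrix.trace (Rᵀ * A) ≤ Matrix.trace S) ∧
    Matrix.trace ((U * Vᵀ)ᵀ * A) = Matrix.trace S := by
  have hV' : V * Vᵀ = 1 := mul_eq_one_comm.mp hV
  have traceMS : ∀ M : Matrix (Fin k) (Fin k) ℝ,
      Matrix.trace (M * S) = ∑ i, M i i * S i i := by
    intro M
    rw [Matrix.trace]
    congr 1; funext i
    rw [Matrix.diag_apply, Matrix.mul_apply]
    rw [Finset.sum_eq_single i]
    · intro j _ hj; rw [hSdiag j i hj, mul_zero]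
    · intro h; exact absurd (Finset.mem_univ i) h
  constructor
  · intro R hR
    have hR' : R * Rᵀ = 1 := mul_eq_one_comm.mp hR
    set M := Vᵀ * Rᵀ * U with hMdef
    have hM : Mᵀ * M = 1 := by
      simp only [hMdef, Matrix.transpose_mul, Matrix.transpose_transpose]
      calc Uᵀ * (R * V) * (Vᵀ * Rᵀ * U)
          = Uᵀ * (R * (V * Vᵀ) * Rᵀ) * U := by noncomm_ring
        _ = 1 := by rw [hV', Matrix.mul_one, hR', Matrix.mul_one, hU]
    have : Matrix.trace (Rᵀ * A) = Matrix.trace (M * S) := by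
      rw [hSVD, hMdef]
      rw [show Rᵀ * (U * S * Vᵀ) = (Rᵀ * U * S) * Vᵀ by noncomm_ring,
        Matrix.trace_mul_comm]
      congr 1; noncomm_ring
    rw [this, traceMS, Matrix.trace]
    apply Finset.sum_le_sum
    intro i _
    calc M i i * S i i ≤ 1 * S i i :=
          mul_le_mul_of_nonneg_right (diag_le_one_of_orthog M hM i) (hSnonneg i)
      _ = S i i := one_mul _
  · rw [hSVD, Matrix.transpose_mul, Matrix.transpose_transpose]
    rw [show V * Uᵀ * (U * S * Vᵀ) = V * (Uᵀ * U) * S * Vᵀ by noncomm_ring, hU,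
      Matrix.mul_one, Matrix.trace_mul_comm, ← Matrix.mul_assoc, hV, Matrix.one_mul]
end

section
/- Let p ≥ 1, let k ∈ ℝ^p and μ > 0, and let α ∈ ℝ be such that Σ_{i=1}^{p} max(α − k_i/μ, 0) = 1. Define m* ∈ ℝ^p by m*_i = max(α − k_i/μ, 0). Then m* lies in the probability simplex, and for every m ∈ ℝ^p with m_i ≥ 0 for all i and Σ_{i=1}^{p} m_i = 1, one has ‖m* + (1/μ)·k‖₂² ≤ ‖m + (1/μ)·k‖₂². That is, the soft-thresholded vector m* is the minimizer, over the probability simplex, of m ↦ ‖m + (1/μ)·k‖₂². -/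
/-- Soft-thresholding solves the simplex-constrained least-squares problem:
if `Σ_i max(α − k_i/μ, 0) = 1` then `m*_i = max(α − k_i/μ, 0)` lies in the
probability simplex and minimizes `‖m + (1/μ)·k‖₂²` over the simplex. -/
theorem simplex_projection_soft_threshold {p : ℕ} (hp : 1 ≤ p)
    (k : Fin p → ℝ) (μ : ℝ) (hμ : 0 < μ) (α : ℝ)
    (hsum : ∑ i, max (α - k i / μ) 0 = 1)
    (mstar : Fin p → ℝ) (hmstar : ∀ i, mstar i = max (α - k i / μ) 0) :
    ((∀ i, 0 ≤ mstar i) ∧ ∑ i, mstar i = 1) ∧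
    (∀ m : Fin p → ℝ, (∀ i, 0 ≤ m i) → ∑ i, m i = 1 →
      ∑ i, (mstar i + (1 / μ) * k i) ^ 2 ≤ ∑ i, (m i + (1 / μ) * k i) ^ 2) := by
  have hsum_mstar : ∑ i, mstar i = 1 := by
    rw [Finset.sum_congr rfl fun i _ => hmstar i]; exact hsum
  refine ⟨⟨fun i => by rw [hmstar i]; exact le_max_right _ _, hsum_mstar⟩, ?_⟩
  intro m hm hsum'
  have key : ∀ i, (m i + (1/μ)*k i)^2 - (mstar i + (1/μ)*k i)^2
      = (m i - mstar i)^2 + 2*α*(m i - mstar i)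
        + 2*(m i - mstar i)*max (k i/μ - α) 0 := by
    intro i
    have h1 : mstar i + (1/μ)*k i = α + max (k i/μ - α) 0 := by
      rw [hmstar i]
      rcases le_total (k i / μ) α with h | h
      · rw [max_eq_left (by linarith), max_eq_right (by linarith)]; ring
      · rw [max_eq_right (by linarith), max_eq_left (by linarith)]; ring
    have h2 : m i + (1/μ)*k i = (m i - mstar i) + (mstar i + (1/μ)*k i) := by ring
    rw [h2, h1]; ring
  have h0 : 0 ≤ ∑ i, ((m i + (1/μ)*k i)^2 - (mstar i + (1/μ)*k i)^2) := by
    rw [Finset.sum_congr rfl fun i _ => key i, Finset.sum_add_distrib,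
      Finset.sum_add_distrib]
    have hB : ∑ i, 2*α*(m i - mstar i) = 0 := by
      rw [← Finset.mul_sum, Finset.sum_sub_distrib, hsum', hsum_mstar]; ring
    have hA : 0 ≤ ∑ i, (m i - mstar i)^2 :=
      Finset.sum_nonneg fun i _ => sq_nonneg _
    have hC : 0 ≤ ∑ i, 2*(m i - mstar i)*max (k i/μ - α) 0 := by
      refine Finset.sum_nonneg fun i _ => ?_
      rcases le_total (k i / μ) α with h | h
      · rw [max_eq_right (by linarith)]; ring_nf; simp
      · have : mstar i = 0 := by
          rw [hmstar i, max_eq_right (by linarith)]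
        rw [this, sub_zero]
        have h2 : (0:ℝ) ≤ max (k i/μ - α) 0 := le_max_right _ _
        have := hm i
        positivity
    linarith
  rw [Finset.sum_sub_distrib] at h0
  linarith
end
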